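/- Let t ∈ Λ²V and e* ∈ V* both be nonzero. Then c_{e*}(t) = 0 if and only if there exist q, r ∈ V with t = q ∧ r, e*(q) = 0 and e*(r) = 0. (Equivalently: the contraction of t by e* vanishes exactly when t is decomposable and represents a line contained in the plane ker e*.) -/

import Mathlib

open TensorProduct

variable (K V : Type*) [Field K] [AddCommGroup V] [Module K V]

/-- The wedge `q ∧ r` of two vectors, as an element of the second exterior power. -/
def wedge2 (q r : V) : ⋀[K]^2 V :=
  ⟨ExteriorAlgebra.ιMulti K 2 ![q, r],
    ExteriorAlgebra.ιMulti_range K 2 (Set.mem_range_self _)⟩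

/-- The wedge `p ∧ q ∧ r` of three vectors, as an element of the third exterior power. -/
def wedge3 (p q r : V) : ⋀[K]^3 V :=
  ⟨ExteriorAlgebra.ιMulti K 3 ![p, q, r],
    ExteriorAlgebra.ιMulti_range K 3 (Set.mem_range_self _)⟩

lemma wedge2_val (q r : V) :
    (wedge2 K V q r : ExteriorAlgebra K V) =
      ExteriorAlgebra.ι K q * ExteriorAlgebra.ι K r := by
  show ExteriorAlgebra.ιMulti K 2 ![q, r] = _
  rw [ExteriorAlgebra.ιMulti_succ_apply, ExteriorAlgebra.ιMulti_succ_apply,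
    ExteriorAlgebra.ιMulti_zero_apply]
  simp [Matrix.vecTail, mul_assoc]

/-- wedge2 as a bilinear map -/
noncomputable def wB : V →ₗ[K] V →ₗ[K] ⋀[K]^2 V :=
  LinearMap.mk₂ K (wedge2 K V)
    (fun x y z => Subtype.ext <| by simp [wedge2_val, add_mul])
    (fun s x y => Subtype.ext <| by simp [wedge2_val, smul_mul_assoc])
    (fun x y z => Subtype.ext <| by simp [wedge2_val, mul_add])
    (fun s x y => Subtype.ext <| by simp [wedge2_val, mul_smul_comm])

@[simp] lemma wB_apply (q r : V) : wB K V q r = wedge2 K V q r := rfl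

lemma wedge2_same (q : V) : wedge2 K V q q = 0 :=
  Subtype.ext <| by simp [wedge2_val, ExteriorAlgebra.ι_sq_zero]

lemma wedge2_antisymm (q r : V) : wedge2 K V q r = - wedge2 K V r q := by
  refine Subtype.ext ?_
  have := ExteriorAlgebra.ι_add_mul_swap (R := K) q r
  simp only [wedge2_val, Submodule.coe_neg]
  exact eq_neg_of_add_eq_zero_left this

lemma exists_wedge_repr (b : Fin 4 → V) (hb : Submodule.span K (Set.range b) = ⊤)
    (t : ⋀[K]^2 V) :
    ∃ a : Fin 4 × Fin 4 → K,
      t = ∑ p : Fin 4 × Fin 4, a p • wedge2 K V (b p.1) (b p.2) := by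
  classical
  set S : Submodule K (⋀[K]^2 V) :=
    Submodule.span K (Set.range fun p : Fin 4 × Fin 4 => wedge2 K V (b p.1) (b p.2)) with hS
  set S' : Submodule K (ExteriorAlgebra K V) :=
    Submodule.span K (Set.range fun p : Fin 4 × Fin 4 =>
      ExteriorAlgebra.ι K (b p.1) * ExteriorAlgebra.ι K (b p.2)) with hS'
  have hι : ∀ x y : V, ExteriorAlgebra.ι K x * ExteriorAlgebra.ι K y ∈ S' := by
    intro x y
    have hx : x ∈ Submodule.span K (Set.range b) := hb ▸ Submodule.mem_top
    have hy : y ∈ Submodule.span K (Set.range b) := hb ▸ Submodule.mem_top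
    induction hx using Submodule.span_induction with
    | mem x hxm =>
      induction hy using Submodule.span_induction with
      | mem y hym =>
        obtain ⟨i, rfl⟩ := hxm
        obtain ⟨j, rfl⟩ := hym
        exact Submodule.subset_span ⟨(i, j), rfl⟩
      | zero => simp
      | add y z hy hz hy' hz' => rw [map_add, mul_add]; exact S'.add_mem hy' hz'
      | smul s y hy hy' => rw [map_smul, mul_smul_comm]; exact S'.smul_mem s hy'
    | zero => simp
    | add x z hx hz hx' hz' => rw [map_add, add_mul]; exact S'.add_mem hx' hz'
    | smul s x hx hx' => rw [map_smul, smul_mul_assoc]; exact S'.smul_mem s hx'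
  have hval : ∀ m : Fin 2 → V, ExteriorAlgebra.ιMulti K 2 m =
      ExteriorAlgebra.ι K (m 0) * ExteriorAlgebra.ι K (m 1) := by
    intro m
    rw [ExteriorAlgebra.ιMulti_succ_apply, ExteriorAlgebra.ιMulti_succ_apply,
      ExteriorAlgebra.ιMulti_zero_apply]
    simp [Matrix.vecTail, mul_assoc]
  have htS' : (t : ExteriorAlgebra K V) ∈ S' := by
    have h1 : (t : ExteriorAlgebra K V) ∈
        Submodule.span K (Set.range (ExteriorAlgebra.ιMulti K 2 (M := V))) := by
      rw [ExteriorAlgebra.ιMulti_span_fixedDegree]; exact t.2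
    refine Submodule.span_le.2 ?_ h1
    rintro _ ⟨m, rfl⟩
    rw [hval m]
    exact hι _ _
  have hmap : Submodule.map (⋀[K]^2 V).subtype S = S' := by
    rw [hS, Submodule.map_span, hS']
    congr 1
    rw [← Set.range_comp]
    refine congrArg Set.range ?_
    funext p
    exact wedge2_val K V _ _
  have htS : t ∈ S := by
    have : (t : ExteriorAlgebra K V) ∈ Submodule.map (⋀[K]^2 V).subtype S := hmap ▸ htS'
    obtain ⟨s, hs, hval'⟩ := this
    have : s = t := Subtype.ext hval'
    exact this ▸ hs
  obtain ⟨a, ha⟩ := (Submodule.mem_span_range_iff_exists_fun K).1 htS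
  exact ⟨a, ha.symm⟩


set_option maxHeartbeats 2000000

/-- For nonzero `t ∈ Λ²V` and `e* ∈ V*`, the contraction `t ⌟ e*` vanishes if and only if
`t = q ∧ r` for some `q, r ∈ ker e*`. Here the contraction by `e*` is given as a linear
map `c e*` with `c e* (q ∧ r) = e*(q)·r − e*(r)·q`. -/
theorem contraction_eq_zero_iff
    (hV : Module.finrank K V = 4)
    (c : Module.Dual K V → (↥(⋀[K]^2 V) →ₗ[K] V))
    (hc : ∀ (e : Module.Dual K V) (q r : V),
      c e (wedge2 K V q r) = e q • r - e r • q)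
    (t : ⋀[K]^2 V) (e : Module.Dual K V) (ht : t ≠ 0) (he : e ≠ 0) :
    c e t = 0 ↔ ∃ q r : V, t = wedge2 K V q r ∧ e q = 0 ∧ e r = 0 := by
  constructor
  · intro h0
    have hFD : FiniteDimensional K V := FiniteDimensional.of_finrank_pos (by omega)
    -- a vector with e v = 1
    obtain ⟨x0, hx0⟩ : ∃ x0, e x0 ≠ 0 := by
      by_contra h
      push_neg at h
      exact he (LinearMap.ext fun x => h x)
    set v : V := (e x0)⁻¹ • x0 with hv
    have hev : e v = 1 := by
      simp [hv, inv_mul_cancel₀ hx0]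
    -- the kernel has dimension 3
    have hker : Module.finrank K (LinearMap.ker e) = 3 := by
      have h1 : Module.finrank K (LinearMap.range e) = 1 := by
        have : LinearMap.range e = ⊤ := by
          rw [eq_top_iff]
          intro s _
          exact ⟨s • v, by simp [hev]⟩
        rw [this]
        simp
      have h2 := LinearMap.finrank_range_add_finrank_ker e
      omega
    let f : Module.Basis (Fin 3) K (LinearMap.ker e) := Module.finBasisOfFinrankEq K _ hker
    set c0 : V := (f 0 : V) with hc0def
    set c1 : V := (f 1 : V) with hc1def
    set c2 : V := (f 2 : V) with hc2def
    have hec0 : e c0 = 0 := (f 0).2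
    have hec1 : e c1 = 0 := (f 1).2
    have hec2 : e c2 = 0 := (f 2).2
    set b : Fin 4 → V := ![c0, c1, c2, v] with hbdef
    have hb0 : b 0 = c0 := rfl
    have hb1 : b 1 = c1 := rfl
    have hb2 : b 2 = c2 := rfl
    have hb3 : b 3 = v := rfl
    -- b spans V
    have hbspan : Submodule.span K (Set.range b) = ⊤ := by
      rw [eq_top_iff]
      rintro x -
      have h1 : x - e x • v ∈ LinearMap.ker e := by
        simp [hev]
      have hy := f.sum_repr ⟨x - e x • v, h1⟩
      have hy' : x - e x • v =
          f.repr ⟨x - e x • v, h1⟩ 0 • c0 + f.repr ⟨x - e x • v, h1⟩ 1 • c1 +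
          f.repr ⟨x - e x • v, h1⟩ 2 • c2 := by
        have := congrArg (Subtype.val) hy
        rw [Fin.sum_univ_three] at this
        simpa [hc0def, hc1def, hc2def] using this.symm
      have hx : x = f.repr ⟨x - e x • v, h1⟩ 0 • c0 + f.repr ⟨x - e x • v, h1⟩ 1 • c1 +
          f.repr ⟨x - e x • v, h1⟩ 2 • c2 + e x • v := by
        rw [← hy']; abel
      rw [hx]
      have m0 : c0 ∈ Set.range b := ⟨0, rfl⟩
      have m1 : c1 ∈ Set.range b := ⟨1, rfl⟩
      have m2 : c2 ∈ Set.range b := ⟨2, rfl⟩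
      have m3 : v ∈ Set.range b := ⟨3, rfl⟩
      exact Submodule.add_mem _
        (Submodule.add_mem _
          (Submodule.add_mem _
            (Submodule.smul_mem _ _ (Submodule.subset_span m0))
            (Submodule.smul_mem _ _ (Submodule.subset_span m1)))
          (Submodule.smul_mem _ _ (Submodule.subset_span m2)))
        (Submodule.smul_mem _ _ (Submodule.subset_span m3))
    -- linear independence of c0, c1, c2
    have hbind : LinearIndependent K (fun i : Fin 3 => ((f i : V))) :=
      f.linearIndependent.map' (LinearMap.ker e).subtype (Submodule.ker_subtype _)
    -- expand t
    obtain ⟨a, hta⟩ := exists_wedge_repr K V b hbspan t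
    -- compute the contraction
    have hct : c e t = ∑ p : Fin 4 × Fin 4, a p • (e (b p.1) • b p.2 - e (b p.2) • b p.1) := by
      rw [hta, map_sum]
      simp [hc]
    have hct2 : (a (3,0) - a (0,3)) • c0 + (a (3,1) - a (1,3)) • c1 +
        (a (3,2) - a (2,3)) • c2 = 0 := by
      rw [← h0, hct, Fintype.sum_prod_type]
      simp only [Fin.sum_univ_four, hb0, hb1, hb2, hb3, hec0, hec1, hec2, hev]
      module
    have hlin := Fintype.linearIndependent_iff.1 hbind
      ![a (3,0) - a (0,3), a (3,1) - a (1,3), a (3,2) - a (2,3)]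
      (by rw [Fin.sum_univ_three]; simpa using hct2)
    have h03 : a (3,0) = a (0,3) := sub_eq_zero.1 (by simpa using hlin 0)
    have h13 : a (3,1) = a (1,3) := sub_eq_zero.1 (by simpa using hlin 1)
    have h23 : a (3,2) = a (2,3) := sub_eq_zero.1 (by simpa using hlin 2)
    set xx : K := a (0,1) - a (1,0) with hxx
    set yy : K := a (0,2) - a (2,0) with hyy
    set zz : K := a (1,2) - a (2,1) with hzz
    have htx : t = xx • wedge2 K V c0 c1 + yy • wedge2 K V c0 c2 +
        zz • wedge2 K V c1 c2 := by
      rw [hta, Fintype.sum_prod_type]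
      simp only [Fin.sum_univ_four, hb0, hb1, hb2, hb3]
      rw [wedge2_same K V c0, wedge2_same K V c1, wedge2_same K V c2, wedge2_same K V v,
        wedge2_antisymm K V c1 c0, wedge2_antisymm K V c2 c0, wedge2_antisymm K V c2 c1,
        wedge2_antisymm K V v c0, wedge2_antisymm K V v c1, wedge2_antisymm K V v c2,
        h03, h13, h23, hxx, hyy, hzz]
      module
    have hw : ∀ (s1 s2 s3 s4 : K) (u1 u2 u3 u4 : V),
        wedge2 K V (s1 • u1 + s2 • u2) (s3 • u3 + s4 • u4) =
          (s1*s3) • wedge2 K V u1 u3 + (s1*s4) • wedge2 K V u1 u4 +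
          (s2*s3) • wedge2 K V u2 u3 + (s2*s4) • wedge2 K V u2 u4 := by
      intro s1 s2 s3 s4 u1 u2 u3 u4
      simp only [← wB_apply, map_add, map_smul, LinearMap.add_apply, LinearMap.smul_apply]
      module
    by_cases hxz : xx = 0
    · refine ⟨yy • c0 + zz • c1, c2, ?_, ?_, ?_⟩
      · have := hw yy zz 1 0 c0 c1 c2 c2
        simp only [one_smul, zero_smul, add_zero, mul_one, mul_zero, zero_add] at this
        rw [htx, hxz, this]
        module
      · simp [hec0, hec1]
      · exact hec2
    · refine ⟨xx • c0 + (-zz) • c2, (1:K) • c1 + (xx⁻¹ * yy) • c2, ?_, ?_, ?_⟩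
      · rw [htx, hw]
        rw [wedge2_same K V c2, wedge2_antisymm K V c2 c1]
        have hcan : xx * (xx⁻¹ * yy) = yy := by field_simp
        rw [hcan]
        module
      · simp [hec0, hec2]
      · simp [hec1, hec2]
  · rintro ⟨q, r, rfl, hq, hr⟩
    rw [hc]
    simp [hq, hr]
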